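/- Let e : ℝ → ℝ satisfy ė = −p(t) φ(t)² e with p, φ continuous, p(t) ≥ p₀ > 0, and suppose φ is persistently exciting: there are T, α > 0 with ∫_t^{t+T} φ(s)² ds ≥ α for all t ≥ 0. Then e(t) → 0 exponentially: |e(t)| ≤ |e(0)| e^{p₀ α} e^{−(p₀ α/T) t} for all t ≥ 0. -/

import Mathlib

theorem rls_error_exponential_convergence (p₀ T α : ℝ) (hp₀ : 0 < p₀)
    (hT : 0 < T) (hα : 0 < α) (e p φ : ℝ → ℝ)
    (hp : Continuous p) (hφ : Continuous φ) (hpb : ∀ t, p₀ ≤ p t)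
    (he : Differentiable ℝ e)
    (hode : ∀ t, deriv e t = -(p t * (φ t) ^ 2) * e t)
    (hPE : ∀ t : ℝ, 0 ≤ t → α ≤ ∫ s in t..(t + T), (φ s) ^ 2) :
    ∀ t : ℝ, 0 ≤ t →
      |e t| ≤ |e 0| * Real.exp (p₀ * α) * Real.exp (-(p₀ * α / T) * t) := by
  have hq : Continuous (fun s => p s * φ s ^ 2) := hp.mul (hφ.pow 2)
  set F : ℝ → ℝ := fun t => ∫ s in (0:ℝ)..t, p s * φ s ^ 2 with hFdef
  have hF0 : F 0 = 0 := intervalIntegral.integral_same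
  have hFd : ∀ t, HasDerivAt F (p t * φ t ^ 2) t := fun t =>
    intervalIntegral.integral_hasDerivAt_right (hq.intervalIntegrable 0 t)
      (hq.stronglyMeasurableAtFilter _ _) hq.continuousAt
  have hg : ∀ t, HasDerivAt (fun t => e t * Real.exp (F t)) 0 t := by
    intro t
    have h1 := (he t).hasDerivAt
    have h2 := (hFd t).exp
    have h3 : HasDerivAt (fun y => e y * Real.exp (F y)) _ t := h1.mul h2
    rw [hode t] at h3
    convert h3 using 1
    ring
  have hconst : ∀ t, e t * Real.exp (F t) = e 0 * Real.exp (F 0) := fun t =>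
    is_const_of_deriv_eq_zero (fun x => (hg x).differentiableAt) (fun x => (hg x).deriv) t 0
  have heq : ∀ t, e t = e 0 * Real.exp (-F t) := by
    intro t
    have h := hconst t
    rw [hF0, Real.exp_zero, mul_one] at h
    have h2 : e t = (e t * Real.exp (F t)) * Real.exp (-F t) := by
      rw [mul_assoc, ← Real.exp_add, add_neg_cancel, Real.exp_zero, mul_one]
    rw [h2, h]
  have hφ2i : ∀ a b : ℝ, IntervalIntegrable (fun s => φ s ^ 2) MeasureTheory.volume a b :=
    fun a b => (hφ.pow 2).intervalIntegrable a b
  have hA : ∀ n : ℕ, (n : ℝ) * α ≤ ∫ s in (0:ℝ)..((n : ℝ) * T), φ s ^ 2 := by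
    intro n
    induction n with
    | zero => simp
    | succ n ih =>
      have hsplit : (∫ s in (0:ℝ)..((n:ℝ)*T), φ s ^ 2)
          + ∫ s in ((n:ℝ)*T)..((n:ℝ)*T + T), φ s ^ 2
          = ∫ s in (0:ℝ)..((n:ℝ)*T + T), φ s ^ 2 :=
        intervalIntegral.integral_add_adjacent_intervals (hφ2i _ _) (hφ2i _ _)
      have hpe := hPE ((n:ℝ)*T) (by positivity)
      have hcast : ((n:ℕ).succ : ℝ) * T = (n:ℝ)*T + T := by push_cast; ring
      rw [hcast, ← hsplit]
      push_cast
      linarith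
  have hB : ∀ t : ℝ, 0 ≤ t → α * (t / T - 1) ≤ ∫ s in (0:ℝ)..t, φ s ^ 2 := by
    intro t ht
    have htT : 0 ≤ t / T := by positivity
    set n : ℕ := (⌊t / T⌋).toNat with hn
    have hnr : (n : ℝ) = (⌊t / T⌋ : ℝ) := by
      rw [hn]; exact_mod_cast Int.toNat_of_nonneg (Int.floor_nonneg.2 htT)
    have hle : (n : ℝ) ≤ t / T := hnr ▸ Int.floor_le _
    have hlt : t / T - 1 ≤ (n : ℝ) := by
      have := Int.lt_floor_add_one (t / T)
      rw [hnr]; linarith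
    have hnT : (n : ℝ) * T ≤ t := (le_div_iff₀ hT).1 hle
    have hsplit : (∫ s in (0:ℝ)..((n:ℝ)*T), φ s ^ 2)
        + ∫ s in ((n:ℝ)*T)..t, φ s ^ 2 = ∫ s in (0:ℝ)..t, φ s ^ 2 :=
      intervalIntegral.integral_add_adjacent_intervals (hφ2i _ _) (hφ2i _ _)
    have hnn : 0 ≤ ∫ s in ((n:ℝ)*T)..t, φ s ^ 2 :=
      intervalIntegral.integral_nonneg hnT (fun x _ => sq_nonneg _)
    have hA' := hA n
    have : α * (t / T - 1) ≤ (n : ℝ) * α := by nlinarith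
    linarith
  have hFlb : ∀ t : ℝ, 0 ≤ t → p₀ * (α * (t / T - 1)) ≤ F t := by
    intro t ht
    have hmono : p₀ * ∫ s in (0:ℝ)..t, φ s ^ 2 ≤ F t := by
      rw [hFdef, ← intervalIntegral.integral_const_mul]
      apply intervalIntegral.integral_mono_on ht
        (((continuous_const.mul (hφ.pow 2))).intervalIntegrable 0 t)
        (hq.intervalIntegrable 0 t)
      intro x _
      exact mul_le_mul_of_nonneg_right (hpb x) (sq_nonneg _)
    have := hB t ht
    nlinarith
  intro t ht
  rw [heq t, abs_mul, Real.abs_exp, mul_assoc, ← Real.exp_add]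
  apply mul_le_mul_of_nonneg_left _ (abs_nonneg _)
  apply Real.exp_le_exp.2
  have := hFlb t ht
  have hexp : p₀ * α + -(p₀ * α / T) * t = -(p₀ * (α * (t / T - 1))) := by
    field_simp; ring
  rw [hexp]
  linarith
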